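/- arXiv:1610.05507 — 4 statements merged into one kernel-verified Lean document; each statement's English description precedes it below -/
import Mathlib

section
/- Let {V_k} and {w_k} be non-negative real sequences satisfying V_{k+1} ≤ a·V_k − b·w_k + c·∑_{j=k−k₀}^{k} w_j for all k ≥ 0, where a ∈ (0,1), b, c ≥ 0, k₀ ∈ ℕ, and w_k = 0 for k < 0. If (c/(1−a))·(1−a^{k₀+1})/a^{k₀} ≤ b, then V_k ≤ a^k · V_0 for all k ≥ 0. -/
theorem sequence_lemma (V w : ℤ → ℝ) (a b c : ℝ) (k₀ : ℕ)
    (hV : ∀ k, 0 ≤ V k) (hw : ∀ k, 0 ≤ w k)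
    (hw0 : ∀ k : ℤ, k < 0 → w k = 0)
    (ha : 0 < a) (ha1 : a < 1) (hb : 0 ≤ b) (hc : 0 ≤ c)
    (hrec : ∀ k : ℕ, V (k + 1) ≤ a * V k - b * w k +
      c * ∑ j ∈ Finset.Icc ((k : ℤ) - k₀) (k : ℤ), w j)
    (hcond : c / (1 - a) * ((1 - a ^ (k₀ + 1)) / a ^ k₀) ≤ b) :
    ∀ k : ℕ, V k ≤ a ^ k * V 0 := by
  have ha0 : a ≠ 0 := ne_of_gt ha
  have hne1 : a ≠ 1 := ne_of_lt ha1
  -- coefficients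
  set γ : ℕ → ℝ := fun i => c * ∑ m ∈ Finset.range (k₀ - i), (a⁻¹) ^ (m + 1) with hγdef
  have hγnn : ∀ i, 0 ≤ γ i := by
    intro i
    exact mul_nonneg hc (Finset.sum_nonneg fun m _ => pow_nonneg (inv_nonneg.mpr ha.le) _)
  have hγtop : γ k₀ = 0 := by simp [hγdef]
  have hmul : ∀ n : ℕ, a * ∑ m ∈ Finset.range (n + 1), (a⁻¹) ^ (m + 1)
      = 1 + ∑ m ∈ Finset.range n, (a⁻¹) ^ (m + 1) := by
    intro n
    rw [Finset.mul_sum]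
    have h1 : ∀ m : ℕ, a * (a⁻¹) ^ (m + 1) = (a⁻¹) ^ m := by
      intro m; rw [pow_succ]; field_simp
    simp only [h1]
    rw [Finset.sum_range_succ']
    simp [add_comm]
  have hγrec : ∀ i, i < k₀ → a * γ i = c + γ (i + 1) := by
    intro i hi
    have hn : k₀ - i = (k₀ - (i + 1)) + 1 := by omega
    simp only [hγdef, hn]
    rw [← mul_assoc, mul_comm a c, mul_assoc, hmul]
    ring
  -- the key scalar bound: c + γ 0 ≤ b
  have hainv : (a : ℝ)⁻¹ ≠ 1 := fun h => hne1 (inv_eq_one.mp h)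
  have hkey : c + γ 0 ≤ b := by
    have h1 : c + γ 0 = c * ∑ m ∈ Finset.range (k₀ + 1), (a⁻¹) ^ m := by
      simp only [hγdef, Nat.sub_zero]
      rw [Finset.sum_range_succ', mul_add]
      simp
      ring
    have hgeom := geom_sum_eq hainv (k₀ + 1)
    have h1a : (1 : ℝ) - a ≠ 0 := sub_ne_zero.mpr (Ne.symm hne1)
    have h2a : (a : ℝ)⁻¹ - 1 ≠ 0 := sub_ne_zero.mpr hainv
    have h2 : c * (((a⁻¹) ^ (k₀ + 1) - 1) / ((a⁻¹) - 1))
        = c / (1 - a) * ((1 - a ^ (k₀ + 1)) / a ^ k₀) := by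
      rw [inv_pow]
      field_simp
      ring
    rw [h1, hgeom, h2]
    exact hcond
  -- reindex the Icc sum
  have hshift : ∀ k : ℕ, ∑ j ∈ Finset.Icc ((k : ℤ) - k₀) (k : ℤ), w j
      = ∑ i ∈ Finset.range (k₀ + 1), w ((k : ℤ) - i) := by
    intro k
    apply Finset.sum_nbij' (i := fun j => ((k : ℤ) - j).toNat) (j := fun i => (k : ℤ) - i)
    · intro j hj
      simp only [Finset.mem_Icc] at hj
      simp only [Finset.mem_range]
      omega
    · intro i hi
      simp only [Finset.mem_range] at hi
      simp only [Finset.mem_Icc]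
      omega
    · intro j hj
      simp only [Finset.mem_Icc] at hj
      omega
    · intro i hi
      simp only [Finset.mem_range] at hi
      omega
    · intro j hj
      simp only [Finset.mem_Icc] at hj
      congr 1
      omega
  -- Lyapunov function
  set G : ℕ → ℝ := fun k => V k + ∑ i ∈ Finset.range k₀, γ i * w ((k : ℤ) - 1 - i) with hGdef
  have hVG : ∀ k : ℕ, V k ≤ G k := by
    intro k
    simp only [hGdef]
    have : 0 ≤ ∑ i ∈ Finset.range k₀, γ i * w ((k : ℤ) - 1 - i) :=
      Finset.sum_nonneg fun i _ => mul_nonneg (hγnn i) (hw _)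
    linarith
  have hG0 : G 0 = V 0 := by
    simp only [hGdef, Nat.cast_zero]
    rw [Finset.sum_eq_zero, add_zero]
    intro i _
    rw [hw0 _ (by omega)]
    ring
  have hstep : ∀ k : ℕ, G (k + 1) ≤ a * G k := by
    intro k
    have hsum1 : ∑ i ∈ Finset.range k₀, γ (i + 1) * w ((k : ℤ) - 1 - i)
        = ∑ i ∈ Finset.range k₀, γ i * w ((k : ℤ) - i) - γ 0 * w k := by
      have h1 : ∑ i ∈ Finset.range (k₀ + 1), γ i * w ((k : ℤ) - i)
          = ∑ i ∈ Finset.range k₀, γ (i + 1) * w ((k : ℤ) - (i + 1 : ℕ)) + γ 0 * w ((k : ℤ) - (0 : ℕ)) :=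
        Finset.sum_range_succ' _ _
      have h2 : ∑ i ∈ Finset.range (k₀ + 1), γ i * w ((k : ℤ) - i)
          = ∑ i ∈ Finset.range k₀, γ i * w ((k : ℤ) - i) + γ k₀ * w ((k : ℤ) - k₀) :=
        Finset.sum_range_succ _ _
      have h3 : ∀ i : ℕ, ((k : ℤ) - (i + 1 : ℕ)) = (k : ℤ) - 1 - i := by intro i; push_cast; ring
      simp only [h3] at h1
      rw [hγtop] at h2
      simp only [Nat.cast_zero, sub_zero, zero_mul, add_zero] at h1 h2
      linarith [h1, h2]
    have hsum2 : ∑ i ∈ Finset.range (k₀ + 1), w ((k : ℤ) - i)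
        = w k + ∑ i ∈ Finset.range k₀, w ((k : ℤ) - 1 - i) := by
      have h1 := Finset.sum_range_succ' (fun i => w ((k : ℤ) - i)) k₀
      have h3 : ∀ i : ℕ, ((k : ℤ) - (i + 1 : ℕ)) = (k : ℤ) - 1 - i := by intro i; push_cast; ring
      simp only [h3] at h1
      simp only [Nat.cast_zero, sub_zero] at h1
      linarith [h1]
    have haG : a * G k = a * V k + c * ∑ i ∈ Finset.range k₀, w ((k : ℤ) - 1 - i)
        + (∑ i ∈ Finset.range k₀, γ i * w ((k : ℤ) - i) - γ 0 * w k) := by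
      simp only [hGdef]
      rw [mul_add, Finset.mul_sum]
      have hterm : ∀ i ∈ Finset.range k₀, a * (γ i * w ((k : ℤ) - 1 - i))
          = c * w ((k : ℤ) - 1 - i) + γ (i + 1) * w ((k : ℤ) - 1 - i) := by
        intro i hi
        rw [Finset.mem_range] at hi
        rw [← mul_assoc, hγrec i hi]
        ring
      rw [Finset.sum_congr rfl hterm, Finset.sum_add_distrib, hsum1, ← Finset.mul_sum]
      ring
    have hGk1 : G (k + 1) = V ((k : ℤ) + 1) + ∑ i ∈ Finset.range k₀, γ i * w ((k : ℤ) - i) := by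
      simp only [hGdef]
      push_cast
      congr 1
      apply Finset.sum_congr rfl
      intro i _
      congr 2
      ring
    have hr := hrec k
    rw [hshift k, hsum2] at hr
    have hwk := hw (k : ℤ)
    have hcgb : (c + γ 0 - b) * w k ≤ 0 :=
      mul_nonpos_of_nonpos_of_nonneg (by linarith) hwk
    rw [hGk1, haG]
    nlinarith [hr]
  -- conclude by induction
  intro k
  have hG : G k ≤ a ^ k * V 0 := by
    induction k with
    | zero => simp [hG0]
    | succ n ih =>
      calc G (n + 1) ≤ a * G n := hstep n
        _ ≤ a * (a ^ n * V 0) := by nlinarith [ha.le]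
        _ = a ^ (n + 1) * V 0 := by ring
  calc V k ≤ G k := hVG k
    _ ≤ a ^ k * V 0 := hG
end

section
/- Suppose assumptions A1–A4 hold (F = ∑ f_n is μ-strongly convex, each f_n convex with L_n-Lipschitz gradient, h convex and subdifferentiable, delays bounded by τ̄), and let x* minimize F + h. Then the iterates of the proximal incremental aggregated gradient method x_{k+1} = argmin_x {⟨g_k, x − x_k⟩ + (1/(2α))‖x − x_k‖² + h(x)} with g_k = ∑_n ∇f_n(x_{k−τ_k^n}) satisfy ‖x_{k+1} − x*‖² ≤ (1/(μα+1))‖x_k − x*‖² − (1/(μα+1))‖x_{k+1} − x_k‖² + (α(τ̄+1)L/(μα+1))·∑_{j=k−τ̄}^{k} ‖x_{j+1} − x_j‖², where L = ∑_n L_n. -/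
open RealInnerProductSpace

section PIAGAux

variable {d : ℕ}
local notation "E" => EuclideanSpace ℝ (Fin d)

lemma piag_lim_helper {A c : ℝ} (hA : 0 ≤ A)
    (H : ∀ t : ℝ, 0 < t → t < 1 → (1 - t) * c ≤ A) : c ≤ A := by
  by_contra hlt
  push_neg at hlt
  have hc0 : 0 < c := lt_of_le_of_lt hA hlt
  have ht1 : (0:ℝ) < (c - A) / (2 * c) := div_pos (by linarith) (by positivity)
  have ht2 : (c - A) / (2 * c) < 1 := by
    rw [div_lt_one (by positivity)]; nlinarith
  have := H _ ht1 ht2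
  have key : (1 - (c - A) / (2 * c)) * c = (c + A) / 2 := by
    field_simp; ring
  rw [key] at this
  linarith

lemma piag_line_hasDerivAt (f : E → ℝ) (gr : E) (a v : E) (t : ℝ)
    (hg : HasGradientAt f gr (a + t • v)) :
    HasDerivAt (fun s : ℝ => f (a + s • v)) ⟪gr, v⟫ t := by
  have hline : HasDerivAt (fun s : ℝ => a + s • v) v t := by
    simpa using ((hasDerivAt_id t).smul_const v).const_add a
  have := hg.hasFDerivAt.comp_hasDerivAt t hline
  simpa [InnerProductSpace.toDual_apply_apply, Function.comp_def] using this

lemma piag_convex_first_order (f : E → ℝ) (gr : E) (u v : E)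
    (hconv : ConvexOn ℝ Set.univ f) (hg : HasGradientAt f gr u) :
    f u + ⟪gr, v - u⟫ ≤ f v := by
  have hD : HasDerivAt (fun s : ℝ => f (u + s • (v - u))) ⟪gr, v - u⟫ 0 := by
    have := piag_line_hasDerivAt f gr u (v - u) 0 (by simpa using hg)
    simpa using this
  have hslope : Filter.Tendsto (slope (fun s : ℝ => f (u + s • (v - u))) 0)
      (nhdsWithin 0 (Set.Ioi 0)) (nhds ⟪gr, v - u⟫) := by
    have := hasDerivAt_iff_tendsto_slope.mp hD
    exact this.mono_left (nhdsWithin_mono _ (by intro x hx; exact ne_of_gt hx))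
  have hbound : ∀ᶠ t in nhdsWithin (0:ℝ) (Set.Ioi 0),
      slope (fun s : ℝ => f (u + s • (v - u))) 0 t ≤ f v - f u := by
    filter_upwards [Ioo_mem_nhdsGT_of_mem (by norm_num : (0:ℝ) ∈ Set.Ico 0 1)] with t ht
    have h1 : f (u + t • (v - u)) ≤ (1 - t) * f u + t * f v := by
      have := hconv.2 (Set.mem_univ u) (Set.mem_univ v)
        (by linarith [ht.2] : (0:ℝ) ≤ 1 - t) (le_of_lt ht.1) (by ring)
      have heq : (1 - t) • u + t • v = u + t • (v - u) := by
        rw [smul_sub, sub_smul, one_smul]; abel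
      rw [heq] at this
      simpa [smul_eq_mul] using this
    rw [slope_def_field]
    simp only [zero_smul, add_zero, sub_zero]
    rw [div_le_iff₀ ht.1]
    nlinarith [ht.1, h1]
  have := le_of_tendsto hslope hbound
  linarith

lemma piag_lipschitz_continuous (gfun : E → E) (Lc : ℝ)
    (hLip : ∀ u v : E, ‖gfun u - gfun v‖ ≤ Lc * ‖u - v‖) : Continuous gfun := by
  rcases le_or_gt Lc 0 with hL | hL
  · have : ∀ u v : E, gfun u = gfun v := by
      intro u v
      have h := hLip u v
      have : ‖gfun u - gfun v‖ ≤ 0 :=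
        h.trans (mul_nonpos_of_nonpos_of_nonneg hL (norm_nonneg _))
      have := le_antisymm this (norm_nonneg _)
      rwa [norm_eq_zero, sub_eq_zero] at this
    have heq : gfun = fun _ => gfun 0 := funext fun u => this u 0
    rw [heq]; exact continuous_const
  · refine (LipschitzWith.of_dist_le_mul (K := ⟨Lc, hL.le⟩) ?_).continuous
    intro u v
    exact (by simpa [dist_eq_norm] using hLip u v : dist (gfun u) (gfun v) ≤ Lc * dist u v)

lemma piag_descent_lemma (f : E → ℝ) (gfun : E → E) (Lc : ℝ)
    (hg : ∀ z, HasGradientAt f (gfun z) z)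
    (hLip : ∀ u v : E, ‖gfun u - gfun v‖ ≤ Lc * ‖u - v‖) (a b : E) :
    f b ≤ f a + ⟪gfun a, b - a⟫ + Lc / 2 * ‖b - a‖ ^ 2 := by
  set ψ' : ℝ → ℝ := fun t => ⟪gfun (a + t • (b - a)), b - a⟫ with hψ'
  have hcontg : Continuous gfun := piag_lipschitz_continuous gfun Lc hLip
  have hcont : Continuous ψ' := by
    apply Continuous.inner
    · exact hcontg.comp (by continuity)
    · exact continuous_const
  have hderiv : ∀ t ∈ Set.uIcc (0:ℝ) 1,
      HasDerivAt (fun s : ℝ => f (a + s • (b - a))) (ψ' t) t := fun t _ =>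
    piag_line_hasDerivAt f _ a (b - a) t (hg _)
  have hint : IntervalIntegrable ψ' MeasureTheory.volume 0 1 :=
    hcont.intervalIntegrable 0 1
  have hftc : ∫ t in (0:ℝ)..1, ψ' t = f b - f a := by
    have := intervalIntegral.integral_eq_sub_of_hasDerivAt hderiv hint
    simpa using this
  have hmono : ∫ t in (0:ℝ)..1, ψ' t ≤
      ∫ t in (0:ℝ)..1, (⟪gfun a, b - a⟫ + Lc * ‖b - a‖ ^ 2 * t) := by
    apply intervalIntegral.integral_mono_on (by norm_num) hint
    · exact (Continuous.intervalIntegrable (by continuity) 0 1)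
    · intro t ht
      have h1 : ψ' t - ⟪gfun a, b - a⟫ = ⟪gfun (a + t • (b - a)) - gfun a, b - a⟫ := by
        rw [inner_sub_left]
      have h2 : ⟪gfun (a + t • (b - a)) - gfun a, b - a⟫ ≤
          ‖gfun (a + t • (b - a)) - gfun a‖ * ‖b - a‖ :=
        real_inner_le_norm _ _
      have h3 : ‖gfun (a + t • (b - a)) - gfun a‖ ≤ Lc * (t * ‖b - a‖) := by
        have := hLip (a + t • (b - a)) a
        simpa [norm_smul, abs_of_nonneg ht.1] using this
      have h4 : ‖gfun (a + t • (b - a)) - gfun a‖ * ‖b - a‖ ≤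
          Lc * (t * ‖b - a‖) * ‖b - a‖ :=
        mul_le_mul_of_nonneg_right h3 (norm_nonneg _)
      nlinarith [h1, h2, h4]
  have hval : ∫ t in (0:ℝ)..1, (⟪gfun a, b - a⟫ + Lc * ‖b - a‖ ^ 2 * t) =
      ⟪gfun a, b - a⟫ + Lc * ‖b - a‖ ^ 2 / 2 := by
    rw [intervalIntegral.integral_add (f := fun _ => ⟪gfun a, b - a⟫)
      (g := fun t : ℝ => Lc * ‖b - a‖ ^ 2 * t) intervalIntegrable_const
      ((continuous_const.mul continuous_id').intervalIntegrable 0 1 :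
        IntervalIntegrable (fun t : ℝ => Lc * ‖b - a‖ ^ 2 * t) MeasureTheory.volume 0 1),
      intervalIntegral.integral_const, intervalIntegral.integral_const_mul, integral_id]
    simp
    ring
  rw [hftc, hval] at hmono
  linarith

lemma piag_telescope (x : ℤ → E) (k : ℤ) : ∀ τ : ℕ,
    ∑ j ∈ Finset.Icc (k - τ) k, (x (j + 1) - x j) = x (k + 1) - x (k - τ) := by
  intro τ
  induction τ with
  | zero => simp
  | succ m ih =>
    have hins : Finset.Icc (k - (m + 1 : ℕ)) k =
        insert (k - (m + 1 : ℕ)) (Finset.Icc (k - (m:ℕ)) k) := by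
      ext j
      simp only [Finset.mem_Icc, Finset.mem_insert]
      omega
    rw [hins, Finset.sum_insert (by simp; omega), ih]
    have h1 : k - (m + 1 : ℕ) + 1 = k - (m : ℕ) := by push_cast; ring
    rw [h1]
    abel

lemma piag_norm_sum_sq_le (s : Finset ℤ) (v : ℤ → E) :
    ‖∑ j ∈ s, v j‖ ^ 2 ≤ s.card * ∑ j ∈ s, ‖v j‖ ^ 2 := by
  calc ‖∑ j ∈ s, v j‖ ^ 2 ≤ (∑ j ∈ s, ‖v j‖) ^ 2 :=
        pow_le_pow_left₀ (norm_nonneg _) (norm_sum_le s v) 2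
    _ ≤ s.card * ∑ j ∈ s, ‖v j‖ ^ 2 := sq_sum_le_card_mul_sum_sq

lemma piag_norm_combo (a b : E) (t : ℝ) :
    ‖(1 - t) • a + t • b‖ ^ 2 = (1 - t) * ‖a‖ ^ 2 + t * ‖b‖ ^ 2 - t * (1 - t) * ‖a - b‖ ^ 2 := by
  have e : ∀ u : E, ‖u‖ ^ 2 = ⟪u, u⟫ := fun u => (real_inner_self_eq_norm_sq u).symm
  rw [e, e, e, e]
  simp only [inner_add_left, inner_add_right, inner_sub_left, inner_sub_right,
    real_inner_smul_left, real_inner_smul_right]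
  rw [real_inner_comm b a]
  ring

lemma piag_prox_strong (G : E) (h : E → ℝ) (α : ℝ) (hα : 0 < α)
    (hhconv : ConvexOn ℝ Set.univ h) (xk xk1 : E)
    (hup : ∀ z, ⟪G, xk1 - xk⟫ + 1 / (2 * α) * ‖xk1 - xk‖ ^ 2 + h xk1 ≤
      ⟪G, z - xk⟫ + 1 / (2 * α) * ‖z - xk‖ ^ 2 + h z) (z : E) :
    ⟪G, xk1 - xk⟫ + 1 / (2 * α) * ‖xk1 - xk‖ ^ 2 + h xk1 + 1 / (2 * α) * ‖z - xk1‖ ^ 2 ≤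
      ⟪G, z - xk⟫ + 1 / (2 * α) * ‖z - xk‖ ^ 2 + h z := by
  set φ1 : ℝ := ⟪G, xk1 - xk⟫ + 1 / (2 * α) * ‖xk1 - xk‖ ^ 2 + h xk1 with hφ1
  set φz : ℝ := ⟪G, z - xk⟫ + 1 / (2 * α) * ‖z - xk‖ ^ 2 + h z with hφz
  have h0 : φ1 ≤ φz := hup z
  have key : 1 / (2 * α) * ‖z - xk1‖ ^ 2 ≤ φz - φ1 := by
    apply piag_lim_helper (by linarith)
    intro t ht0 ht1
    set zt : E := (1 - t) • xk1 + t • z with hzt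
    have hsub : zt - xk = (1 - t) • (xk1 - xk) + t • (z - xk) := by
      rw [hzt]; module
    have hinner : ⟪G, zt - xk⟫ = (1 - t) * ⟪G, xk1 - xk⟫ + t * ⟪G, z - xk⟫ := by
      rw [hsub, inner_add_right, real_inner_smul_right, real_inner_smul_right]
    have hnorm : ‖zt - xk‖ ^ 2 = (1 - t) * ‖xk1 - xk‖ ^ 2 + t * ‖z - xk‖ ^ 2
        - t * (1 - t) * ‖z - xk1‖ ^ 2 := by
      rw [hsub, piag_norm_combo]
      have : (xk1 - xk) - (z - xk) = xk1 - z := by abel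
      rw [this, norm_sub_rev xk1 z]
    have hh : h zt ≤ (1 - t) * h xk1 + t * h z := by
      have := hhconv.2 (Set.mem_univ xk1) (Set.mem_univ z)
        (by linarith : (0:ℝ) ≤ 1 - t) ht0.le (by ring)
      simpa [smul_eq_mul] using this
    have hupz := hup zt
    rw [hinner, hnorm] at hupz
    have : t * φ1 ≤ t * φz - 1 / (2 * α) * (t * (1 - t) * ‖z - xk1‖ ^ 2) := by
      rw [hφ1, hφz]; nlinarith [hupz]
    have h2 : t * ((1 - t) * (1 / (2 * α) * ‖z - xk1‖ ^ 2)) ≤ t * (φz - φ1) := by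
      nlinarith [this]
    have h3 := le_of_mul_le_mul_left h2 ht0
    linarith
  linarith

lemma piag_growth {N : ℕ} (f : Fin N → E → ℝ) (g : Fin N → E → E) (μ : ℝ)
    (h : E → ℝ) (xstar : E) (hμ : 0 < μ)
    (hsc : ∀ u v : E, (∑ n, f n u) ≥ (∑ n, f n v) + ⟪∑ n, g n v, u - v⟫ +
      μ / 2 * ‖u - v‖ ^ 2)
    (hhconv : ConvexOn ℝ Set.univ h)
    (hstar : ∀ z, (∑ n, f n xstar) + h xstar ≤ (∑ n, f n z) + h z) (z : E) :
    (∑ n, f n xstar) + h xstar + μ / 2 * ‖z - xstar‖ ^ 2 ≤ (∑ n, f n z) + h z := by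
  have key : μ / 2 * ‖z - xstar‖ ^ 2 ≤
      ((∑ n, f n z) + h z) - ((∑ n, f n xstar) + h xstar) := by
    apply piag_lim_helper (by linarith [hstar z])
    intro t ht0 ht1
    set xt : E := (1 - t) • xstar + t • z with hxt
    have hd1 : xstar - xt = t • (xstar - z) := by rw [hxt]; module
    have hd2 : z - xt = (1 - t) • (z - xstar) := by rw [hxt]; module
    have h1 := hsc xstar xt
    have h2 := hsc z xt
    rw [hd1] at h1
    rw [hd2] at h2
    rw [real_inner_smul_right] at h1 h2
    rw [norm_smul] at h1 h2
    have habs1 : ‖(t:ℝ)‖ = t := by rw [Real.norm_eq_abs, abs_of_pos ht0]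
    have habs2 : ‖(1 - t:ℝ)‖ = 1 - t := by
      rw [Real.norm_eq_abs, abs_of_pos (by linarith)]
    rw [habs1] at h1
    rw [habs2] at h2
    have hflip : ⟪∑ n, g n xt, xstar - z⟫ = -⟪∑ n, g n xt, z - xstar⟫ := by
      rw [← inner_neg_right]; congr 1; abel
    rw [hflip] at h1
    have hnr : ‖xstar - z‖ = ‖z - xstar‖ := norm_sub_rev _ _
    rw [hnr] at h1
    have hcomb : (1 - t) * (∑ n, f n xstar) + t * (∑ n, f n z) ≥
        (∑ n, f n xt) + μ / 2 * (t * (1 - t)) * ‖z - xstar‖ ^ 2 := by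
      nlinarith [h1, h2, sq_nonneg ‖z - xstar‖]
    have hh : h xt ≤ (1 - t) * h xstar + t * h z := by
      have := hhconv.2 (Set.mem_univ xstar) (Set.mem_univ z)
        (by linarith : (0:ℝ) ≤ 1 - t) ht0.le (by ring)
      simpa [smul_eq_mul] using this
    have hst := hstar xt
    have hmul : t * ((1 - t) * (μ / 2 * ‖z - xstar‖ ^ 2)) ≤
        t * (((∑ n, f n z) + h z) - ((∑ n, f n xstar) + h xstar)) := by
      nlinarith [hcomb, hh, hst]
    have h3 := le_of_mul_le_mul_left hmul ht0
    linarith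
  linarith

end PIAGAux

set_option maxHeartbeats 1000000 in
/-- One-step contraction inequality for the asynchronous proximal incremental
aggregated gradient (PIAG) method under assumptions A1--A4. -/
theorem piag_one_step_inequality {d N : ℕ}
    (f : Fin N → EuclideanSpace ℝ (Fin d) → ℝ)
    (g : Fin N → EuclideanSpace ℝ (Fin d) → EuclideanSpace ℝ (Fin d))
    (L : Fin N → ℝ) (μ α : ℝ) (τbar : ℕ)
    (h : EuclideanSpace ℝ (Fin d) → ℝ)
    (x : ℤ → EuclideanSpace ℝ (Fin d))
    (τ : ℤ → Fin N → ℕ)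
    (xstar : EuclideanSpace ℝ (Fin d))
    (hμ : 0 < μ) (hα : 0 < α)
    -- A2: each fₙ convex with Lₙ-Lipschitz gradient
    (hfconv : ∀ n, ConvexOn ℝ Set.univ (f n))
    (hgrad : ∀ n z, HasGradientAt (f n) (g n z) z)
    (hLip : ∀ n u v, ‖g n u - g n v‖ ≤ L n * ‖u - v‖)
    -- A1: F = ∑ fₙ is μ-strongly convex
    (hsc : ∀ u v, (∑ n, f n u) ≥ (∑ n, f n v) + ⟪∑ n, g n v, u - v⟫ +
      μ / 2 * ‖u - v‖ ^ 2)
    -- A3: h convex (hence subdifferentiable on its domain)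
    (hhconv : ConvexOn ℝ Set.univ h)
    -- A4: bounded delays
    (hτ : ∀ k n, τ k n ≤ τbar)
    -- iterates fixed before time 0
    (hpast : ∀ j : ℤ, j < 0 → x (j + 1) = x j)
    -- update rule: x_{k+1} minimizes the proximal model with aggregated gradient g_k
    (hupdate : ∀ k : ℤ, 0 ≤ k → ∀ z,
      ⟪∑ n, g n (x (k - τ k n)), x (k + 1) - x k⟫ +
        1 / (2 * α) * ‖x (k + 1) - x k‖ ^ 2 + h (x (k + 1)) ≤
      ⟪∑ n, g n (x (k - τ k n)), z - x k⟫ +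
        1 / (2 * α) * ‖z - x k‖ ^ 2 + h z)
    -- x* minimizes F + h
    (hstar : ∀ z, (∑ n, f n xstar) + h xstar ≤ (∑ n, f n z) + h z) :
    ∀ k : ℤ, 0 ≤ k →
      ‖x (k + 1) - xstar‖ ^ 2 ≤
        1 / (μ * α + 1) * ‖x k - xstar‖ ^ 2
        - 1 / (μ * α + 1) * ‖x (k + 1) - x k‖ ^ 2
        + α * (τbar + 1) * (∑ n, L n) / (μ * α + 1) *
            ∑ j ∈ Finset.Icc (k - τbar) k, ‖x (j + 1) - x j‖ ^ 2 := by
  intro k hk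
  by_cases hd : d = 0
  · subst hd
    have hz : ∀ u : EuclideanSpace ℝ (Fin 0), ‖u‖ = 0 := fun u => by
      simp [EuclideanSpace.norm_eq]
    simp [hz]
  -- d ≠ 0 : the L n are nonnegative
  have hLnn : ∀ n, 0 ≤ L n := by
    intro n
    have hdpos : 0 < d := Nat.pos_of_ne_zero hd
    set e : EuclideanSpace ℝ (Fin d) := EuclideanSpace.single ⟨0, hdpos⟩ 1 with he
    have hne : ‖e - 0‖ = 1 := by
      rw [sub_zero, he, EuclideanSpace.norm_single]; norm_num
    have := hLip n e 0
    rw [hne, mul_one] at this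
    exact le_trans (norm_nonneg _) this
  set G : EuclideanSpace ℝ (Fin d) := ∑ n, g n (x (k - τ k n)) with hG
  -- step 1 : strong minimality of the prox step, at x*
  have step1 := piag_prox_strong G h α hα hhconv (x k) (x (k + 1)) (hupdate k hk) xstar
  have hsplit : ⟪G, x (k + 1) - x k⟫ - ⟪G, xstar - x k⟫ = ⟪G, x (k + 1) - xstar⟫ := by
    rw [← inner_sub_right]; congr 1; abel
  -- step 2 : per-component lower bound via convexity and the descent lemma
  have step2 : ∀ n : Fin N, f n (x (k + 1)) - f n xstar
      - L n / 2 * ‖x (k + 1) - x (k - τ k n)‖ ^ 2 ≤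
      ⟪g n (x (k - τ k n)), x (k + 1) - xstar⟫ := by
    intro n
    have hfo := piag_convex_first_order (f n) (g n (x (k - τ k n))) (x (k - τ k n)) xstar
      (hfconv n) (hgrad n _)
    have hdl := piag_descent_lemma (f n) (g n) (L n) (hgrad n) (hLip n)
      (x (k - τ k n)) (x (k + 1))
    have hdecomp : ⟪g n (x (k - τ k n)), x (k + 1) - xstar⟫ =
        ⟪g n (x (k - τ k n)), x (k + 1) - x (k - τ k n)⟫ +
        ⟪g n (x (k - τ k n)), x (k - τ k n) - xstar⟫ := by
      rw [← inner_add_right]; congr 1; abel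
    have hneg : ⟪g n (x (k - τ k n)), x (k - τ k n) - xstar⟫ =
        -⟪g n (x (k - τ k n)), xstar - x (k - τ k n)⟫ := by
      rw [← inner_neg_right]; congr 1; abel
    rw [hdecomp, hneg]
    linarith [hdl, hfo]
  have hsum : (∑ n, f n (x (k + 1))) - (∑ n, f n xstar)
      - ∑ n, L n / 2 * ‖x (k + 1) - x (k - τ k n)‖ ^ 2 ≤ ⟪G, x (k + 1) - xstar⟫ := by
    rw [hG, sum_inner]
    calc (∑ n, f n (x (k + 1))) - (∑ n, f n xstar)
          - ∑ n, L n / 2 * ‖x (k + 1) - x (k - τ k n)‖ ^ 2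
        = ∑ n, (f n (x (k + 1)) - f n xstar
            - L n / 2 * ‖x (k + 1) - x (k - τ k n)‖ ^ 2) := by
          rw [Finset.sum_sub_distrib, Finset.sum_sub_distrib]
      _ ≤ ∑ n, ⟪g n (x (k - τ k n)), x (k + 1) - xstar⟫ :=
          Finset.sum_le_sum fun n _ => step2 n
  -- step 3 : quadratic growth at x*
  have step3 := piag_growth f g μ h xstar hμ hsc hhconv hstar (x (k + 1))
  -- combine
  rw [norm_sub_rev xstar (x (k + 1)), norm_sub_rev xstar (x k)] at step1
  have hcore : μ / 2 * ‖x (k + 1) - xstar‖ ^ 2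
      - ∑ n, L n / 2 * ‖x (k + 1) - x (k - τ k n)‖ ^ 2 ≤
      1 / (2 * α) * (‖x k - xstar‖ ^ 2 - ‖x (k + 1) - x k‖ ^ 2
        - ‖x (k + 1) - xstar‖ ^ 2) := by
    nlinarith [step1, hsum, step3, hsplit]
  -- step 4 : bound the delayed differences
  set Sg : ℝ := ∑ j ∈ Finset.Icc (k - τbar) k, ‖x (j + 1) - x j‖ ^ 2 with hSg
  have hSgnn : 0 ≤ Sg := Finset.sum_nonneg fun j _ => by positivity
  have hbound : ∀ n : Fin N, ‖x (k + 1) - x (k - τ k n)‖ ^ 2 ≤ ((τbar : ℝ) + 1) * Sg := by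
    intro n
    rw [← piag_telescope x k (τ k n)]
    have hcs := piag_norm_sum_sq_le (Finset.Icc (k - (τ k n : ℤ)) k) (fun j => x (j + 1) - x j)
    have hcard : ((Finset.Icc (k - (τ k n : ℤ)) k).card : ℝ) ≤ (τbar : ℝ) + 1 := by
      have : (Finset.Icc (k - (τ k n : ℤ)) k).card = τ k n + 1 := by
        rw [Int.card_Icc]; omega
      rw [this]
      have h5 := hτ k n
      push_cast
      have : ((τ k n : ℝ)) ≤ (τbar : ℝ) := by exact_mod_cast h5
      linarith
    have hsubset : Finset.Icc (k - (τ k n : ℤ)) k ⊆ Finset.Icc (k - (τbar : ℤ)) k := by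
      apply Finset.Icc_subset_Icc _ le_rfl
      have : (τ k n : ℤ) ≤ (τbar : ℤ) := by exact_mod_cast hτ k n
      omega
    have hmonos : ∑ j ∈ Finset.Icc (k - (τ k n : ℤ)) k, ‖x (j + 1) - x j‖ ^ 2 ≤ Sg := by
      rw [hSg]
      exact Finset.sum_le_sum_of_subset_of_nonneg hsubset (fun j _ _ => by positivity)
    have hsmallnn : (0:ℝ) ≤ ∑ j ∈ Finset.Icc (k - (τ k n : ℤ)) k, ‖x (j + 1) - x j‖ ^ 2 :=
      Finset.sum_nonneg fun j _ => by positivity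
    calc ‖∑ j ∈ Finset.Icc (k - (τ k n : ℤ)) k, (x (j + 1) - x j)‖ ^ 2
        ≤ ((Finset.Icc (k - (τ k n : ℤ)) k).card : ℝ) *
            ∑ j ∈ Finset.Icc (k - (τ k n : ℤ)) k, ‖x (j + 1) - x j‖ ^ 2 := hcs
      _ ≤ ((τbar : ℝ) + 1) * Sg := by
          apply mul_le_mul hcard hmonos hsmallnn (by positivity)
  -- sum up the delayed bounds
  set LL : ℝ := ∑ n, L n with hLL
  have hLLnn : 0 ≤ LL := Finset.sum_nonneg fun n _ => hLnn n
  have hT : ∑ n, L n / 2 * ‖x (k + 1) - x (k - τ k n)‖ ^ 2 ≤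
      LL / 2 * (((τbar : ℝ) + 1) * Sg) := by
    have hre : LL / 2 * (((τbar : ℝ) + 1) * Sg) =
        ∑ n, L n / 2 * (((τbar : ℝ) + 1) * Sg) := by
      rw [hLL, Finset.sum_div, Finset.sum_mul]
    rw [hre]
    apply Finset.sum_le_sum
    intro n _
    exact mul_le_mul_of_nonneg_left (hbound n) (div_nonneg (hLnn n) (by norm_num))
  -- final algebra
  have hden : (0:ℝ) < μ * α + 1 := by nlinarith
  have hfin : (μ * α + 1) * ‖x (k + 1) - xstar‖ ^ 2 ≤
      ‖x k - xstar‖ ^ 2 - ‖x (k + 1) - x k‖ ^ 2 + α * ((τbar : ℝ) + 1) * LL * Sg := by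
    have I : μ / 2 * ‖x (k + 1) - xstar‖ ^ 2 - LL / 2 * (((τbar : ℝ) + 1) * Sg) ≤
        1 / (2 * α) * (‖x k - xstar‖ ^ 2 - ‖x (k + 1) - x k‖ ^ 2
          - ‖x (k + 1) - xstar‖ ^ 2) := by linarith [hcore, hT]
    have I2 := mul_le_mul_of_nonneg_left I (by positivity : (0:ℝ) ≤ 2 * α)
    have e1 : 2 * α * (1 / (2 * α) * (‖x k - xstar‖ ^ 2 - ‖x (k + 1) - x k‖ ^ 2
        - ‖x (k + 1) - xstar‖ ^ 2)) = ‖x k - xstar‖ ^ 2 - ‖x (k + 1) - x k‖ ^ 2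
        - ‖x (k + 1) - xstar‖ ^ 2 := by
      field_simp
    rw [e1] at I2
    nlinarith [I2]
  have e2 : (1 / (μ * α + 1) * ‖x k - xstar‖ ^ 2
      - 1 / (μ * α + 1) * ‖x (k + 1) - x k‖ ^ 2
      + α * ((τbar : ℝ) + 1) * LL / (μ * α + 1) * Sg) * (μ * α + 1) =
      ‖x k - xstar‖ ^ 2 - ‖x (k + 1) - x k‖ ^ 2 + α * ((τbar : ℝ) + 1) * LL * Sg := by
    field_simp
  have hP : ‖x (k + 1) - xstar‖ ^ 2 * (μ * α + 1) ≤
      (1 / (μ * α + 1) * ‖x k - xstar‖ ^ 2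
      - 1 / (μ * α + 1) * ‖x (k + 1) - x k‖ ^ 2
      + α * ((τbar : ℝ) + 1) * LL / (μ * α + 1) * Sg) * (μ * α + 1) := by
    rw [e2]; linarith [hfin]
  have := le_of_mul_le_mul_right hP hden
  linarith [this]
end

section
/- Under assumptions A1–A4 (F = ∑_{n=1}^N f_n is μ-strongly convex, each f_n convex with L_n-Lipschitz gradient, h proper convex subdifferentiable, delays bounded by τ̄), if the step-size satisfies α ≤ ((1 + (μ/L)·1/(τ̄+1))^{1/(τ̄+1)} − 1)/μ with L = ∑_n L_n, then the iterates of the asynchronous proximal incremental aggregated gradient method satisfy ‖x_k − x*‖² ≤ (1/(μα+1))^k ‖x_0 − x*‖² for all k ≥ 0, where x* is the minimizer of F + h. -/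
open RealInnerProductSpace

variable {E : Type*} [NormedAddCommGroup E] [InnerProductSpace ℝ E] [CompleteSpace E]

lemma aux_line_deriv (f : E → ℝ) (G v w : E) (t : ℝ)
    (hg : HasGradientAt f G (v + t • w)) :
    HasDerivAt (fun s : ℝ => f (v + s • w)) ⟪G, w⟫ t := by
  have hc : HasDerivAt (fun s : ℝ => v + s • w) w t := by
    simpa using ((hasDerivAt_id t).smul_const w).const_add v
  have := (hg.hasFDerivAt).comp_hasDerivAt t hc
  simpa [InnerProductSpace.toDual_apply_apply, Function.comp_def] using this

lemma aux_convex_grad {f : E → ℝ} {g : E → E}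
    (hconv : ConvexOn ℝ Set.univ f) (hgrad : ∀ z, HasGradientAt f (g z) z)
    (u v : E) : f v + ⟪g v, u - v⟫ ≤ f u := by
  set w := u - v with hw
  have hd : HasDerivAt (fun s : ℝ => f (v + s • w)) ⟪g v, w⟫ 0 := by
    apply aux_line_deriv
    simpa using hgrad v
  have hslope : Filter.Tendsto (slope (fun s : ℝ => f (v + s • w)) 0) (nhdsWithin 0 {(0:ℝ)}ᶜ)
      (nhds ⟪g v, w⟫) := hasDerivAt_iff_tendsto_slope.mp hd
  have hslope' : Filter.Tendsto (slope (fun s : ℝ => f (v + s • w)) 0)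
      (nhdsWithin 0 (Set.Ioi (0:ℝ))) (nhds ⟪g v, w⟫) :=
    hslope.mono_left (nhdsWithin_mono _ (by intro t ht; exact ne_of_gt ht))
  have hbound : ∀ᶠ t in nhdsWithin (0:ℝ) (Set.Ioi 0),
      slope (fun s : ℝ => f (v + s • w)) 0 t ≤ f u - f v := by
    filter_upwards [Ioc_mem_nhdsGT_of_mem (by norm_num : (0:ℝ) ∈ Set.Ico (0:ℝ) 1)] with t ht
    have ht0 : 0 < t := ht.1
    have ht1 : t ≤ 1 := ht.2
    have hcv : f (v + t • w) ≤ t * f u + (1 - t) * f v := by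
      have := hconv.2 (Set.mem_univ u) (Set.mem_univ v) (le_of_lt ht0)
        (by linarith : (0:ℝ) ≤ 1 - t) (by ring)
      have hpt : t • u + (1 - t) • v = v + t • w := by
        rw [hw]; module
      rw [hpt] at this
      simpa [smul_eq_mul] using this
    rw [slope_def_field]
    simp only [zero_smul, add_zero, sub_zero]
    rw [div_le_iff₀ ht0]
    nlinarith [hcv]
  have := le_of_tendsto hslope' hbound
  linarith

lemma aux_descent {f : E → ℝ} {g : E → E} {L : ℝ} (hL : 0 ≤ L)
    (hgrad : ∀ z, HasGradientAt f (g z) z)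
    (hLip : ∀ u v, ‖g u - g v‖ ≤ L * ‖u - v‖)
    (u v : E) : f u ≤ f v + ⟪g v, u - v⟫ + L / 2 * ‖u - v‖ ^ 2 := by
  set w := u - v with hw
  have hgcont : Continuous g := by
    have : LipschitzWith (Real.toNNReal L) g := by
      apply LipschitzWith.of_dist_le_mul
      intro a b
      rw [dist_eq_norm, dist_eq_norm]
      calc ‖g a - g b‖ ≤ L * ‖a - b‖ := hLip a b
        _ ≤ (Real.toNNReal L) * ‖a - b‖ := by
            gcongr; exact Real.le_coe_toNNReal L
    exact this.continuous
  set F' : ℝ → ℝ := fun t => ⟪g (v + t • w), w⟫ with hF'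
  have hF'cont : Continuous F' := by
    apply Continuous.inner
    · exact hgcont.comp (by continuity)
    · exact continuous_const
  have hderiv : ∀ t ∈ Set.uIcc (0:ℝ) 1, HasDerivAt (fun s : ℝ => f (v + s • w)) (F' t) t := by
    intro t _
    exact aux_line_deriv f _ v w t (hgrad _)
  have hftc : ∫ t in (0:ℝ)..1, F' t = f (v + (1:ℝ) • w) - f (v + (0:ℝ) • w) :=
    intervalIntegral.integral_eq_sub_of_hasDerivAt hderiv (hF'cont.intervalIntegrable 0 1)
  have heq : f u - f v = ∫ t in (0:ℝ)..1, F' t := by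
    rw [hftc, hw]; norm_num
  have hmono : ∫ t in (0:ℝ)..1, F' t ≤ ∫ t in (0:ℝ)..1, (⟪g v, w⟫ + L * ‖w‖ ^ 2 * t) := by
    apply intervalIntegral.integral_mono_on (by norm_num)
      (hF'cont.intervalIntegrable 0 1)
      ((continuous_const.add (continuous_const.mul continuous_id')).intervalIntegrable 0 1)
    intro t ht
    have ht0 : 0 ≤ t := ht.1
    have : F' t - ⟪g v, w⟫ ≤ L * ‖w‖ ^ 2 * t := by
      have h1 : F' t - ⟪g v, w⟫ = ⟪g (v + t • w) - g v, w⟫ := by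
        rw [hF']; simp [inner_sub_left]
      rw [h1]
      calc ⟪g (v + t • w) - g v, w⟫ ≤ ‖g (v + t • w) - g v‖ * ‖w‖ := real_inner_le_norm _ _
        _ ≤ (L * ‖(v + t • w) - v‖) * ‖w‖ := by gcongr; exact hLip _ _
        _ = L * ‖w‖ ^ 2 * t := by
            simp only [add_sub_cancel_left, norm_smul, Real.norm_eq_abs, abs_of_nonneg ht0]
            ring
    simp only [Pi.add_apply, Pi.mul_apply]
    linarith
  have hint : ∫ t in (0:ℝ)..1, (⟪g v, w⟫ + L * ‖w‖ ^ 2 * t)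
      = ⟪g v, w⟫ + L / 2 * ‖w‖ ^ 2 := by
    rw [intervalIntegral.integral_add (intervalIntegrable_const)
      (show IntervalIntegrable (fun t => L * ‖w‖ ^ 2 * t) MeasureTheory.volume 0 1 from
        (continuous_const.mul continuous_id').intervalIntegrable 0 1)]
    rw [intervalIntegral.integral_const_mul, integral_id, intervalIntegral.integral_const]
    norm_num; ring
  have hfin : f u - f v ≤ ⟪g v, w⟫ + L / 2 * ‖w‖ ^ 2 := by
    rw [heq]; rw [hint] at hmono; exact hmono
  linarith

lemma aux_eps {a b : ℝ} (h : ∀ ε : ℝ, 0 < ε → a ≤ b + ε) : a ≤ b := by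
  by_contra hc
  push_neg at hc
  have := h ((a - b)/2) (by linarith)
  linarith

lemma aux_VI {α : ℝ} (hα : 0 < α) {h : E → ℝ} (hh : ConvexOn ℝ Set.univ h)
    (G u v : E)
    (hupd : ∀ z, ⟪G, u - v⟫ + 1/(2*α)*‖u - v‖^2 + h u ≤
      ⟪G, z - v⟫ + 1/(2*α)*‖z - v‖^2 + h z) :
    ∀ z, ⟪G, u - z⟫ + (1/α)*⟪u - v, u - z⟫ ≤ h z - h u := by
  intro z
  set A : ℝ := ⟪G, z - u⟫ + (1/α)*⟪u - v, z - u⟫ + h z - h u with hA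
  set B : ℝ := 1/(2*α)*‖z - u‖^2 with hB
  have hB0 : 0 ≤ B := by
    apply mul_nonneg (by positivity) (by positivity)
  clear_value A B
  have key : ∀ t : ℝ, 0 < t → t ≤ 1 → 0 ≤ A + t * B := by
    intro t ht0 ht1
    have h1 := hupd (u + t • (z - u))
    have e1 : u + t • (z - u) - v = (u - v) + t • (z - u) := by module
    have e2 : ⟪G, (u - v) + t • (z - u)⟫ = ⟪G, u - v⟫ + t * ⟪G, z - u⟫ := by
      rw [inner_add_right, real_inner_smul_right]
    have e3 : ‖(u - v) + t • (z - u)‖^2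
        = ‖u - v‖^2 + 2*(t*⟪u - v, z - u⟫) + t^2*‖z - u‖^2 := by
      rw [norm_add_sq_real, real_inner_smul_right, norm_smul]
      simp [Real.norm_eq_abs, mul_pow, sq_abs]
    have e4 : h (u + t • (z - u)) ≤ (1 - t) * h u + t * h z := by
      have hp : u + t • (z - u) = t • z + (1 - t) • u := by module
      rw [hp]
      have := hh.2 (Set.mem_univ z) (Set.mem_univ u) (le_of_lt ht0)
        (by linarith : (0:ℝ) ≤ 1 - t) (by ring)
      simpa [smul_eq_mul, add_comm] using this
    rw [e1, e2, e3] at h1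
    -- h1 : ⟪G,u-v⟫ + 1/(2α)‖u-v‖² + h u ≤ ⟪G,u-v⟫ + t⟪G,z-u⟫ + 1/(2α)(...) + h zt
    have h2 : 0 ≤ t * ⟪G, z - u⟫ + 1/(2*α)*(2*(t*⟪u - v, z - u⟫))
        + 1/(2*α)*(t^2*‖z - u‖^2) + t*(h z - h u) := by nlinarith [h1, e4]
    have h3 : t * ⟪G, z - u⟫ + 1/(2*α)*(2*(t*⟪u - v, z - u⟫))
        + 1/(2*α)*(t^2*‖z - u‖^2) + t*(h z - h u) = t * (A + t * B) := by
      rw [hA, hB]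
      field_simp
      ring
    rw [h3] at h2
    exact nonneg_of_mul_nonneg_right (by linarith [h2]) ht0
  have hA0 : 0 ≤ A := by
    have : ∀ ε : ℝ, 0 < ε → -A ≤ 0 + ε := by
      intro ε hε
      have htpos : 0 < min 1 (ε/(B+1)) := lt_min one_pos (div_pos hε (by linarith))
      have := key (min 1 (ε/(B+1))) htpos (min_le_left _ _)
      have htB : min 1 (ε/(B+1)) * B ≤ ε := by
        calc min 1 (ε/(B+1)) * B ≤ (ε/(B+1)) * B :=
              mul_le_mul_of_nonneg_right (min_le_right _ _) hB0
          _ ≤ ε := by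
              rw [div_mul_eq_mul_div, div_le_iff₀ (by linarith)]
              nlinarith
      linarith [this, htB]
    have := aux_eps this
    linarith
  have ea : ⟪G, u - z⟫ = -⟪G, z - u⟫ := by
    rw [← neg_sub z u, inner_neg_right]
  have eb : ⟪u - v, u - z⟫ = -⟪u - v, z - u⟫ := by
    rw [← neg_sub z u, inner_neg_right]
  rw [ea, eb] at *
  rw [hA] at hA0
  linarith [hA0]

lemma aux_strongmin {F h : E → ℝ} {G : E → E} {μ : ℝ} (hμ : 0 < μ)
    (hsc : ∀ u v, F u ≥ F v + ⟪G v, u - v⟫ + μ/2 * ‖u - v‖^2)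
    (hh : ConvexOn ℝ Set.univ h) (xs : E)
    (hstar : ∀ z, F xs + h xs ≤ F z + h z) :
    ∀ z, F xs + h xs + μ/2 * ‖z - xs‖^2 ≤ F z + h z := by
  intro z
  set Q : ℝ := ‖z - xs‖^2 with hQ
  have hQ0 : 0 ≤ Q := by positivity
  set D : ℝ := (F z + h z) - (F xs + h xs) with hD
  have key : ∀ t : ℝ, 0 < t → t < 1 → μ/2*(1-t)*Q ≤ D := by
    intro t ht0 ht1
    set p := xs + t • (z - xs) with hp
    have hzp : z - p = (1-t) • (z - xs) := by rw [hp]; module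
    have hxp : xs - p = (-t) • (z - xs) := by rw [hp]; module
    have h1 := hsc z p
    have h2 := hsc xs p
    rw [hzp] at h1
    rw [hxp] at h2
    rw [real_inner_smul_right, norm_smul] at h1 h2
    simp only [Real.norm_eq_abs, mul_pow, sq_abs] at h1 h2
    rw [← hQ] at h1 h2
    -- h1 : F z ≥ F p + (1-t)*⟪G p, z-xs⟫ + μ/2*((1-t)^2*Q)
    -- h2 : F xs ≥ F p + (-t)*⟪G p, z-xs⟫ + μ/2*((-t)^2*Q)
    have e1 := mul_le_mul_of_nonneg_left h1.le (le_of_lt ht0)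
    have e2 := mul_le_mul_of_nonneg_left h2.le (by linarith : (0:ℝ) ≤ 1 - t)
    have comb : F p + μ/2*(t*(1-t))*Q ≤ t * F z + (1-t) * F xs := by nlinarith [e1, e2]
    have h3 : h p ≤ t * h z + (1-t) * h xs := by
      have hp2 : p = t • z + (1-t) • xs := by rw [hp]; module
      rw [hp2]
      have := hh.2 (Set.mem_univ z) (Set.mem_univ xs) (le_of_lt ht0)
        (by linarith : (0:ℝ) ≤ 1 - t) (by ring)
      simpa [smul_eq_mul] using this
    have h4 := hstar p
    have h5 : t * (μ/2*(1-t)*Q) ≤ t * D := by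
      rw [hD]
      nlinarith [comb, h3, h4]
    exact le_of_mul_le_mul_left h5 ht0
  have : μ/2*Q ≤ D := by
    apply aux_eps
    intro ε hε
    set t : ℝ := min (1/2) (ε/(μ/2*Q+1)) with htdef
    have ht0 : 0 < t := lt_min (by norm_num) (div_pos hε (by positivity))
    have ht1 : t < 1 := lt_of_le_of_lt (min_le_left _ _) (by norm_num)
    have h6 := key t ht0 ht1
    have h7 : t * (μ/2*Q) ≤ ε := by
      calc t * (μ/2*Q) ≤ (ε/(μ/2*Q+1)) * (μ/2*Q) :=
            mul_le_mul_of_nonneg_right (min_le_right _ _) (by positivity)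
        _ ≤ ε := by
            rw [div_mul_eq_mul_div, div_le_iff₀ (by positivity)]
            nlinarith
    nlinarith [h6, h7]
  linarith [this]

lemma aux_normsq {ι : Type*} (s : Finset ι) (v : ι → E) :
    ‖∑ i ∈ s, v i‖^2 ≤ (s.card : ℝ) * ∑ i ∈ s, ‖v i‖^2 := by
  calc ‖∑ i ∈ s, v i‖^2 ≤ (∑ i ∈ s, ‖v i‖)^2 :=
        pow_le_pow_left₀ (norm_nonneg _) (norm_sum_le _ _) 2
    _ ≤ (s.card : ℝ) * ∑ i ∈ s, ‖v i‖^2 := by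
        exact_mod_cast sq_sum_le_card_mul_sum_sq (f := fun i => ‖v i‖) (s := s)

lemma aux_delay (x : ℤ → E) (K : ℤ) (T τbar : ℕ) (hT : T ≤ τbar) :
    ‖x (K+1) - x (K - T)‖^2 ≤
      ((τbar:ℝ)+1) * ∑ m ∈ Finset.range (τbar+1), ‖x (K - m + 1) - x (K - m)‖^2 := by
  have htel : x (K+1) - x (K - T)
      = ∑ i ∈ Finset.range (T+1), (x (K - T + i + 1) - x (K - T + i)) := by
    have h0 := Finset.sum_range_sub (fun i : ℕ => x (K - T + i)) (T+1)
    have e1 : ∀ i : ℕ, x (K - T + ((i:ℕ)+1 : ℕ)) - x (K - T + i)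
        = x (K - T + i + 1) - x (K - T + i) := by
      intro i; congr 2; push_cast; ring
    rw [Finset.sum_congr rfl (fun i _ => e1 i)] at h0
    rw [h0]
    congr 2
    · push_cast; ring
    · push_cast; ring
  rw [htel]
  calc ‖∑ i ∈ Finset.range (T+1), (x (K - T + i + 1) - x (K - T + i))‖^2
      ≤ ((Finset.range (T+1)).card : ℝ) *
        ∑ i ∈ Finset.range (T+1), ‖x (K - T + i + 1) - x (K - T + i)‖^2 :=
        aux_normsq _ _
    _ = ((T:ℝ)+1) * ∑ m ∈ Finset.range (T+1), ‖x (K - m + 1) - x (K - m)‖^2 := by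
        rw [Finset.card_range]
        congr 1
        · push_cast; ring
        · rw [← Finset.sum_range_reflect]
          apply Finset.sum_congr rfl
          intro i hi
          have hi' : i ≤ T := Nat.lt_succ_iff.mp (Finset.mem_range.mp hi)
          have : ((T + 1 - 1 - i : ℕ) : ℤ) = (T:ℤ) - i := by
            push_cast [Nat.cast_sub hi']; ring
          rw [this]
          congr 2 <;> ring
    _ ≤ ((τbar:ℝ)+1) * ∑ m ∈ Finset.range (τbar+1), ‖x (K - m + 1) - x (K - m)‖^2 := by
        apply mul_le_mul
        · exact_mod_cast by exact_mod_cast Nat.add_le_add_right hT 1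
        · apply Finset.sum_le_sum_of_subset_of_nonneg
          · exact Finset.range_subset_range.mpr (Nat.add_le_add_right hT 1)
          · intro i _ _; positivity
        · positivity
        · positivity

lemma aux_seq {ρ C : ℝ} (τbar : ℕ) (hρ1 : 1 < ρ) (hC0 : 0 ≤ C)
    (V : ℕ → ℝ) (W : ℤ → ℝ)
    (hV0 : ∀ k, 0 ≤ V k) (hW0 : ∀ j, 0 ≤ W j)
    (hWneg : ∀ j : ℤ, j < 0 → W j = 0)
    (hgeo : C * ∑ m ∈ Finset.range (τbar+1), ρ^m ≤ 1)
    (hstep : ∀ k : ℕ, ρ * V (k+1) ≤ V k - W k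
      + C * ∑ m ∈ Finset.range (τbar+1), W ((k:ℤ) - (m:ℤ))) :
    ∀ k : ℕ, ρ^k * V k ≤ V 0 := by
  have hρ0 : (0:ℝ) < ρ := lt_trans one_pos hρ1
  have hSW : ∀ m : ℕ, ∀ K : ℕ,
      ∑ k ∈ Finset.range K, ρ^k * W ((k:ℤ) - (m:ℤ))
        ≤ ρ^m * ∑ i ∈ Finset.range K, ρ^i * W (i:ℤ) := by
    intro m K
    have hRHS0 : 0 ≤ ρ^m * ∑ i ∈ Finset.range K, ρ^i * W (i:ℤ) := by
      apply mul_nonneg (pow_nonneg hρ0.le m)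
      exact Finset.sum_nonneg fun i _ => mul_nonneg (pow_nonneg hρ0.le i) (hW0 _)
    rcases le_or_gt K m with hle | hlt
    · have hz : ∀ k ∈ Finset.range K, ρ^k * W ((k:ℤ) - (m:ℤ)) = 0 := by
        intro k hk
        have hkm : (k:ℤ) - (m:ℤ) < 0 := by
          have := Finset.mem_range.mp hk
          omega
        rw [hWneg _ hkm, mul_zero]
      rw [Finset.sum_eq_zero hz]
      exact hRHS0
    · rw [Finset.range_eq_Ico, ← Finset.sum_Ico_consecutive _ (Nat.zero_le m) hlt.le]
      have hz : ∀ k ∈ Finset.Ico 0 m, ρ^k * W ((k:ℤ) - (m:ℤ)) = 0 := by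
        intro k hk
        have : k < m := (Finset.mem_Ico.mp hk).2
        rw [hWneg _ (by omega), mul_zero]
      rw [Finset.sum_eq_zero hz, zero_add]
      rw [Finset.sum_Ico_eq_sum_range]
      have he : ∀ i ∈ Finset.range (K - m), ρ^(m+i) * W (((m+i:ℕ):ℤ) - (m:ℤ))
          = ρ^m * (ρ^i * W (i:ℤ)) := by
        intro i _
        have : ((m+i:ℕ):ℤ) - (m:ℤ) = (i:ℤ) := by push_cast; ring
        rw [this, pow_add]; ring
      rw [Finset.sum_congr rfl he, ← Finset.mul_sum]
      apply mul_le_mul_of_nonneg_left _ (pow_nonneg hρ0.le m)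
      apply Finset.sum_le_sum_of_subset_of_nonneg
      · rw [← Finset.range_eq_Ico]
        exact Finset.range_subset_range.mpr (Nat.sub_le K m)
      · intro i _ _
        exact mul_nonneg (pow_nonneg hρ0.le i) (hW0 _)
  have hKS : ∀ K : ℕ, ρ^K * V K + ∑ k ∈ Finset.range K, ρ^k * W (k:ℤ)
      ≤ V 0 + C * ∑ k ∈ Finset.range K, ρ^k *
        (∑ m ∈ Finset.range (τbar+1), W ((k:ℤ) - (m:ℤ))) := by
    intro K
    induction K with
    | zero => simp
    | succ K ih =>
      have h1 := mul_le_mul_of_nonneg_left (hstep K) (pow_nonneg hρ0.le K)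
      have e1 : ρ^K * (ρ * V (K+1)) = ρ^(K+1) * V (K+1) := by ring
      have e2 : ρ^K * (V K - W (K:ℤ) + C * ∑ m ∈ Finset.range (τbar+1), W ((K:ℤ) - (m:ℤ)))
          = ρ^K * V K - ρ^K * W (K:ℤ)
            + C * (ρ^K * ∑ m ∈ Finset.range (τbar+1), W ((K:ℤ) - (m:ℤ))) := by ring
      rw [e1, e2] at h1
      rw [Finset.sum_range_succ, Finset.sum_range_succ, mul_add]
      linarith
  intro K
  have h2 := hKS K
  set T := ∑ i ∈ Finset.range K, ρ^i * W (i:ℤ) with hT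
  have hT0 : 0 ≤ T :=
    Finset.sum_nonneg fun i _ => mul_nonneg (pow_nonneg hρ0.le i) (hW0 _)
  have hd : ∑ k ∈ Finset.range K, ρ^k *
      (∑ m ∈ Finset.range (τbar+1), W ((k:ℤ) - (m:ℤ)))
      ≤ (∑ m ∈ Finset.range (τbar+1), ρ^m) * T := by
    calc ∑ k ∈ Finset.range K, ρ^k * (∑ m ∈ Finset.range (τbar+1), W ((k:ℤ) - (m:ℤ)))
        = ∑ m ∈ Finset.range (τbar+1), ∑ k ∈ Finset.range K, ρ^k * W ((k:ℤ) - (m:ℤ)) := by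
          simp_rw [Finset.mul_sum]
          rw [Finset.sum_comm]
      _ ≤ ∑ m ∈ Finset.range (τbar+1), ρ^m * T :=
          Finset.sum_le_sum fun m _ => hSW m K
      _ = (∑ m ∈ Finset.range (τbar+1), ρ^m) * T := by rw [Finset.sum_mul]
  have h3 : C * ∑ k ∈ Finset.range K, ρ^k *
      (∑ m ∈ Finset.range (τbar+1), W ((k:ℤ) - (m:ℤ)))
      ≤ C * ((∑ m ∈ Finset.range (τbar+1), ρ^m) * T) :=
    mul_le_mul_of_nonneg_left hd hC0
  have h4 : C * ((∑ m ∈ Finset.range (τbar+1), ρ^m) * T) ≤ 1 * T := by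
    rw [← mul_assoc]
    exact mul_le_mul_of_nonneg_right hgeo hT0
  linarith

/-- Linear convergence (Theorem 1) for the asynchronous proximal incremental
aggregated gradient (PIAG) method under assumptions A1--A4. -/
theorem piag_linear_convergence {d N : ℕ}
    (f : Fin N → EuclideanSpace ℝ (Fin d) → ℝ)
    (g : Fin N → EuclideanSpace ℝ (Fin d) → EuclideanSpace ℝ (Fin d))
    (L : Fin N → ℝ) (μ α : ℝ) (τbar : ℕ)
    (h : EuclideanSpace ℝ (Fin d) → ℝ)
    (x : ℤ → EuclideanSpace ℝ (Fin d))
    (τ : ℤ → Fin N → ℕ)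
    (xstar : EuclideanSpace ℝ (Fin d))
    (hμ : 0 < μ) (hα : 0 < α)
    -- A2: each fₙ convex with Lₙ-Lipschitz gradient
    (hfconv : ∀ n, ConvexOn ℝ Set.univ (f n))
    (hgrad : ∀ n z, HasGradientAt (f n) (g n z) z)
    (hLip : ∀ n u v, ‖g n u - g n v‖ ≤ L n * ‖u - v‖)
    -- A1: F = ∑ fₙ is μ-strongly convex
    (hsc : ∀ u v, (∑ n, f n u) ≥ (∑ n, f n v) + ⟪∑ n, g n v, u - v⟫ +
      μ / 2 * ‖u - v‖ ^ 2)
    -- A3: h convex (hence subdifferentiable on its domain)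
    (hhconv : ConvexOn ℝ Set.univ h)
    -- A4: bounded delays
    (hτ : ∀ k n, τ k n ≤ τbar)
    -- iterates fixed before time 0
    (hpast : ∀ j : ℤ, j < 0 → x (j + 1) = x j)
    -- update rule: x_{k+1} minimizes the proximal model with aggregated gradient g_k
    (hupdate : ∀ k : ℤ, 0 ≤ k → ∀ z,
      ⟪∑ n, g n (x (k - τ k n)), x (k + 1) - x k⟫ +
        1 / (2 * α) * ‖x (k + 1) - x k‖ ^ 2 + h (x (k + 1)) ≤
      ⟪∑ n, g n (x (k - τ k n)), z - x k⟫ +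
        1 / (2 * α) * ‖z - x k‖ ^ 2 + h z)
    -- x* minimizes F + h
    (hstar : ∀ z, (∑ n, f n xstar) + h xstar ≤ (∑ n, f n z) + h z)
    -- step-size condition
    (hstep : α ≤ ((1 + μ / (∑ n, L n) * (1 / (τbar + 1))) ^
      ((1 : ℝ) / (τbar + 1)) - 1) / μ) :
    ∀ k : ℕ,
      ‖x k - xstar‖ ^ 2 ≤ (1 / (μ * α + 1)) ^ k * ‖x 0 - xstar‖ ^ 2 := by
  rcases subsingleton_or_nontrivial (EuclideanSpace ℝ (Fin d)) with hsub | hnt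
  · intro k
    rw [show x (k:ℤ) = xstar from Subsingleton.elim _ _,
      show x 0 = xstar from Subsingleton.elim _ _]
    simp
  obtain ⟨u0, v0, huv⟩ := exists_pair_ne (EuclideanSpace ℝ (Fin d))
  have hLn : ∀ n, 0 ≤ L n := by
    intro n
    have h1 := hLip n u0 v0
    have h2 : 0 < ‖u0 - v0‖ := by rw [norm_pos_iff, sub_ne_zero]; exact huv
    nlinarith [norm_nonneg (g n u0 - g n v0)]
  have hLsum0 : 0 ≤ ∑ n, L n := Finset.sum_nonneg fun n _ => hLn n
  have hτ1 : (0:ℝ) < (τbar:ℝ) + 1 := by positivity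
  have hLpos : 0 < ∑ n, L n := by
    rcases hLsum0.eq_or_lt with he | hl
    · exfalso
      rw [← he] at hstep
      simp [Real.one_rpow] at hstep
      linarith
    · exact hl
  set ρ : ℝ := μ * α + 1 with hρdef
  have hρ1 : 1 < ρ := by rw [hρdef]; nlinarith
  have hρ0 : (0:ℝ) < ρ := lt_trans one_pos hρ1
  have hstep' : μ * α ≤ (1 + μ / (∑ n, L n) * (1/((τbar:ℝ)+1)))^((1:ℝ)/((τbar:ℝ)+1)) - 1 := by
    rw [le_div_iff₀ hμ] at hstep
    linarith
  set c : ℝ := μ / (∑ n, L n) * (1/((τbar:ℝ)+1)) with hcdef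
  have hc0 : 0 < c := by rw [hcdef]; positivity
  have h1c : (0:ℝ) ≤ 1 + c := by linarith
  have hpow : ρ^(τbar+1) ≤ 1 + c := by
    have hρle : ρ ≤ (1+c)^((1:ℝ)/((τbar:ℝ)+1)) := by
      rw [hρdef]; linarith [hstep']
    calc ρ^(τbar+1) ≤ ((1+c)^((1:ℝ)/((τbar:ℝ)+1)))^(τbar+1) :=
          pow_le_pow_left₀ hρ0.le hρle _
      _ = 1 + c := by
          rw [← Real.rpow_natCast ((1+c)^((1:ℝ)/((τbar:ℝ)+1))) (τbar+1),
            ← Real.rpow_mul h1c]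
          have he : (1:ℝ)/((τbar:ℝ)+1) * ((τbar+1 : ℕ):ℝ) = 1 := by
            push_cast; field_simp
          rw [he, Real.rpow_one]
  set C : ℝ := α * (∑ n, L n) * ((τbar:ℝ)+1) with hCdef
  have hC0 : 0 ≤ C := by rw [hCdef]; positivity
  have hgeo : C * ∑ m ∈ Finset.range (τbar+1), ρ^m ≤ 1 := by
    have hg : ∑ m ∈ Finset.range (τbar+1), ρ^m = (ρ^(τbar+1) - 1)/(ρ - 1) :=
      geom_sum_eq (ne_of_gt hρ1) _
    have hρm1 : ρ - 1 = μ * α := by rw [hρdef]; ring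
    rw [hg, hρm1, hCdef, ← mul_div_assoc, div_le_one (by positivity)]
    have hZ : ρ^(τbar+1) - 1 ≤ c := by linarith [hpow]
    calc α * (∑ n, L n) * ((τbar:ℝ)+1) * (ρ^(τbar+1) - 1)
        ≤ α * (∑ n, L n) * ((τbar:ℝ)+1) * c :=
          mul_le_mul_of_nonneg_left hZ (by positivity)
      _ = μ * α := by rw [hcdef]; field_simp
  have hkey : ∀ k : ℕ, ρ * ‖x ((k:ℤ)+1) - xstar‖^2 ≤ ‖x (k:ℤ) - xstar‖^2
      - ‖x ((k:ℤ)+1) - x (k:ℤ)‖^2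
      + C * ∑ m ∈ Finset.range (τbar+1),
          ‖x ((k:ℤ) - (m:ℤ) + 1) - x ((k:ℤ) - (m:ℤ))‖^2 := by
    intro k
    have hK0 : (0:ℤ) ≤ (k:ℤ) := Int.natCast_nonneg k
    have hVI := aux_VI hα hhconv (∑ n, g n (x ((k:ℤ) - τ (k:ℤ) n)))
      (x ((k:ℤ)+1)) (x (k:ℤ)) (hupdate (k:ℤ) hK0) xstar
    have hdec : ∀ n : Fin N,
        f n (x ((k:ℤ)+1)) - f n xstar
          - L n/2 * ‖x ((k:ℤ)+1) - x ((k:ℤ) - τ (k:ℤ) n)‖^2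
        ≤ ⟪g n (x ((k:ℤ) - τ (k:ℤ) n)), x ((k:ℤ)+1) - xstar⟫ := by
      intro n
      have hd := aux_descent (hLn n) (hgrad n) (hLip n)
        (x ((k:ℤ)+1)) (x ((k:ℤ) - τ (k:ℤ) n))
      have hc := aux_convex_grad (hfconv n) (hgrad n) xstar (x ((k:ℤ) - τ (k:ℤ) n))
      have hsplit : ⟪g n (x ((k:ℤ) - τ (k:ℤ) n)), x ((k:ℤ)+1) - xstar⟫
          = ⟪g n (x ((k:ℤ) - τ (k:ℤ) n)), x ((k:ℤ)+1) - x ((k:ℤ) - τ (k:ℤ) n)⟫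
          + ⟪g n (x ((k:ℤ) - τ (k:ℤ) n)), x ((k:ℤ) - τ (k:ℤ) n) - xstar⟫ := by
        rw [← inner_add_right, sub_add_sub_cancel]
      have hneg : ⟪g n (x ((k:ℤ) - τ (k:ℤ) n)), x ((k:ℤ) - τ (k:ℤ) n) - xstar⟫
          = -⟪g n (x ((k:ℤ) - τ (k:ℤ) n)), xstar - x ((k:ℤ) - τ (k:ℤ) n)⟫ := by
        rw [← neg_sub xstar (x ((k:ℤ) - τ (k:ℤ) n)), inner_neg_right]
      linarith [hd, hc, hsplit, hneg]
    have hsum : (∑ n, f n (x ((k:ℤ)+1))) - (∑ n, f n xstar)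
        - ∑ n, L n/2 * ‖x ((k:ℤ)+1) - x ((k:ℤ) - τ (k:ℤ) n)‖^2
        ≤ ⟪∑ n, g n (x ((k:ℤ) - τ (k:ℤ) n)), x ((k:ℤ)+1) - xstar⟫ := by
      rw [sum_inner]
      have h1 := Finset.sum_le_sum (fun n (_ : n ∈ Finset.univ) => hdec n)
      rw [Finset.sum_sub_distrib, Finset.sum_sub_distrib] at h1
      linarith [h1]
    have hsm := aux_strongmin (F := fun z => ∑ n, f n z) (h := h)
      (G := fun z => ∑ n, g n z) hμ hsc hhconv xstar hstar (x ((k:ℤ)+1))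
    have hid : 2*⟪x ((k:ℤ)+1) - x (k:ℤ), x ((k:ℤ)+1) - xstar⟫
        = ‖x ((k:ℤ)+1) - x (k:ℤ)‖^2 + ‖x ((k:ℤ)+1) - xstar‖^2
          - ‖x (k:ℤ) - xstar‖^2 := by
      have h0 := norm_sub_sq_real (x ((k:ℤ)+1) - x (k:ℤ)) (x ((k:ℤ)+1) - xstar)
      have e : (x ((k:ℤ)+1) - x (k:ℤ)) - (x ((k:ℤ)+1) - xstar) = xstar - x (k:ℤ) := by
        abel
      rw [e, norm_sub_rev xstar (x (k:ℤ))] at h0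
      linarith [h0]
    have hmain : (1/α)*⟪x ((k:ℤ)+1) - x (k:ℤ), x ((k:ℤ)+1) - xstar⟫
        ≤ -(μ/2)*‖x ((k:ℤ)+1) - xstar‖^2
          + ∑ n, L n/2 * ‖x ((k:ℤ)+1) - x ((k:ℤ) - τ (k:ℤ) n)‖^2 := by
      linarith [hVI, hsum, hsm]
    have h2α := mul_le_mul_of_nonneg_left hmain (by positivity : (0:ℝ) ≤ 2*α)
    have e1 : 2*α*((1/α)*⟪x ((k:ℤ)+1) - x (k:ℤ), x ((k:ℤ)+1) - xstar⟫)
        = 2*⟪x ((k:ℤ)+1) - x (k:ℤ), x ((k:ℤ)+1) - xstar⟫ := by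
      field_simp
    have e2 : 2*α*(-(μ/2)*‖x ((k:ℤ)+1) - xstar‖^2
        + ∑ n, L n/2 * ‖x ((k:ℤ)+1) - x ((k:ℤ) - τ (k:ℤ) n)‖^2)
        = -(μ*α)*‖x ((k:ℤ)+1) - xstar‖^2
          + α * ∑ n, L n * ‖x ((k:ℤ)+1) - x ((k:ℤ) - τ (k:ℤ) n)‖^2 := by
      rw [mul_add]
      congr 1
      · ring
      · rw [Finset.mul_sum, Finset.mul_sum]
        exact Finset.sum_congr rfl fun n _ => by ring
    rw [e1, e2] at h2α
    have hdel : ∀ n : Fin N, ‖x ((k:ℤ)+1) - x ((k:ℤ) - τ (k:ℤ) n)‖^2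
        ≤ ((τbar:ℝ)+1) * ∑ m ∈ Finset.range (τbar+1),
            ‖x ((k:ℤ) - (m:ℤ) + 1) - x ((k:ℤ) - (m:ℤ))‖^2 :=
      fun n => aux_delay x (k:ℤ) (τ (k:ℤ) n) τbar (hτ (k:ℤ) n)
    have hsd : α * ∑ n, L n * ‖x ((k:ℤ)+1) - x ((k:ℤ) - τ (k:ℤ) n)‖^2
        ≤ C * ∑ m ∈ Finset.range (τbar+1),
            ‖x ((k:ℤ) - (m:ℤ) + 1) - x ((k:ℤ) - (m:ℤ))‖^2 := by
      have h5 : ∑ n, L n * ‖x ((k:ℤ)+1) - x ((k:ℤ) - τ (k:ℤ) n)‖^2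
          ≤ ∑ n : Fin N, L n * (((τbar:ℝ)+1) * ∑ m ∈ Finset.range (τbar+1),
              ‖x ((k:ℤ) - (m:ℤ) + 1) - x ((k:ℤ) - (m:ℤ))‖^2) :=
        Finset.sum_le_sum fun n _ => mul_le_mul_of_nonneg_left (hdel n) (hLn n)
      have h6 : ∑ n : Fin N, L n * (((τbar:ℝ)+1) * ∑ m ∈ Finset.range (τbar+1),
            ‖x ((k:ℤ) - (m:ℤ) + 1) - x ((k:ℤ) - (m:ℤ))‖^2)
          = (∑ n, L n) * (((τbar:ℝ)+1) * ∑ m ∈ Finset.range (τbar+1),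
            ‖x ((k:ℤ) - (m:ℤ) + 1) - x ((k:ℤ) - (m:ℤ))‖^2) := by
        rw [← Finset.sum_mul]
      calc α * ∑ n, L n * ‖x ((k:ℤ)+1) - x ((k:ℤ) - τ (k:ℤ) n)‖^2
          ≤ α * ∑ n : Fin N, L n * (((τbar:ℝ)+1) * ∑ m ∈ Finset.range (τbar+1),
              ‖x ((k:ℤ) - (m:ℤ) + 1) - x ((k:ℤ) - (m:ℤ))‖^2) :=
            mul_le_mul_of_nonneg_left h5 hα.le
        _ = C * ∑ m ∈ Finset.range (τbar+1),
              ‖x ((k:ℤ) - (m:ℤ) + 1) - x ((k:ℤ) - (m:ℤ))‖^2 := by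
            rw [h6, hCdef]; ring
    rw [hρdef]
    linarith [h2α, hid, hsd]
  have hfin := aux_seq τbar hρ1 hC0 (fun k : ℕ => ‖x (k:ℤ) - xstar‖^2)
    (fun j : ℤ => ‖x (j+1) - x j‖^2)
    (fun k => by positivity) (fun j => by positivity)
    (fun j hj => by rw [hpast j hj]; simp)
    hgeo
    (by
      intro k
      have hk := hkey k
      push_cast
      exact hk)
  intro k
  have h7 := hfin k
  simp only [Nat.cast_zero] at h7
  have h8 : ‖x (k:ℤ) - xstar‖^2 ≤ ‖x (0:ℤ) - xstar‖^2 / ρ^k := by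
    rw [le_div_iff₀ (pow_pos hρ0 k)]
    linarith [h7]
  have e9 : (1/ρ)^k * ‖x (0:ℤ) - xstar‖^2 = ‖x (0:ℤ) - xstar‖^2 / ρ^k := by
    rw [div_pow, one_pow]; ring
  rw [e9]
  exact h8
end

section
/- Let a = 1/(μα+1) ∈ (0,1), b = a, c = α(τ̄+1)L/(μα+1), with μ, L > 0, τ̄ ∈ ℕ, α > 0. Then the condition (c/(1−a))·(1−a^{τ̄+1})/a^{τ̄} ≤ b is implied by the step-size bound α ≤ ((1 + (μ/L)·1/(τ̄+1))^{1/(τ̄+1)} − 1)/μ. -/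
theorem stepsize_implies_lemma_condition
    (μ L α : ℝ) (τbar : ℕ) (hμ : 0 < μ) (hL : 0 < L) (hα : 0 < α)
    (hstep : α ≤ ((1 + μ / L * (1 / (τbar + 1))) ^ ((1 : ℝ) / (τbar + 1)) - 1) / μ) :
    let a : ℝ := 1 / (μ * α + 1)
    let b : ℝ := a
    let c : ℝ := α * (τbar + 1) * L / (μ * α + 1)
    c / (1 - a) * ((1 - a ^ (τbar + 1)) / a ^ τbar) ≤ b := by
  intro a b c
  have hnpos : (0:ℝ) < (τbar : ℝ) + 1 := by positivity
  have hXpos : (0:ℝ) < 1 + μ / L * (1 / ((τbar:ℝ) + 1)) := by positivity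
  have hs1 : 1 < μ * α + 1 := by nlinarith
  have hspos : 0 < μ * α + 1 := by linarith
  have h1 : μ * α + 1 ≤ (1 + μ / L * (1 / ((τbar:ℝ) + 1))) ^ ((1:ℝ) / ((τbar:ℝ) + 1)) := by
    rw [le_div_iff₀ hμ] at hstep
    nlinarith
  have hspow : (μ*α+1) ^ (τbar + 1) ≤ 1 + μ / L * (1 / ((τbar:ℝ) + 1)) := by
    calc (μ*α+1) ^ (τbar+1)
        ≤ ((1 + μ / L * (1 / ((τbar:ℝ) + 1))) ^ ((1:ℝ) / ((τbar:ℝ) + 1))) ^ (τbar+1) :=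
          pow_le_pow_left₀ (le_of_lt hspos) h1 _
      _ = 1 + μ / L * (1 / ((τbar:ℝ) + 1)) := by
          rw [← Real.rpow_natCast ((1 + μ / L * (1 / ((τbar:ℝ) + 1))) ^ ((1:ℝ) / ((τbar:ℝ) + 1))) (τbar+1),
            ← Real.rpow_mul (le_of_lt hXpos)]
          push_cast
          rw [one_div_mul_cancel (by positivity), Real.rpow_one]
  have hu : (0:ℝ) < (μ*α+1) ^ τbar := by positivity
  have hu1 : (1:ℝ) ≤ (μ*α+1) ^ τbar := one_le_pow₀ (le_of_lt hs1)
  rw [pow_succ] at hspow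
  show α * (↑τbar + 1) * L / (μ * α + 1) / (1 - 1 / (μ * α + 1)) *
      ((1 - (1 / (μ * α + 1)) ^ (τbar + 1)) / (1 / (μ * α + 1)) ^ τbar) ≤ 1 / (μ * α + 1)
  rw [pow_succ, div_pow, one_pow]
  have h1a : 1 - 1 / (μ * α + 1) = μ * α / (μ * α + 1) := by field_simp; ring
  rw [h1a]
  have hspow' : L * ((τbar:ℝ)+1) * ((μ*α+1) ^ τbar * (μ*α+1)) ≤ L * ((τbar:ℝ)+1) + μ := by
    have := mul_le_mul_of_nonneg_left hspow (by positivity : (0:ℝ) ≤ L * ((τbar:ℝ)+1))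
    calc L * ((τbar:ℝ)+1) * ((μ*α+1) ^ τbar * (μ*α+1)) ≤ L * ((τbar:ℝ)+1) * (1 + μ / L * (1 / ((τbar:ℝ)+1))) := this
      _ = L * ((τbar:ℝ)+1) + μ := by field_simp
  have hμα : 0 < μ * α := by positivity
  rw [show α * (↑τbar + 1) * L / (μ * α + 1) / (μ * α / (μ * α + 1)) *
      ((1 - 1 / (μ * α + 1) ^ τbar * (1 / (μ * α + 1))) / (1 / (μ * α + 1) ^ τbar)) =
      (((τbar:ℝ)+1) * L * ((μ*α+1)^τbar * (μ*α+1) - 1)) / (μ * (μ*α+1)) from by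
    field_simp]
  rw [div_le_div_iff₀ (by positivity) hspos]
  nlinarith [hspow']
end
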